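/- Every collection of uncountably many finite sets contains an uncountable Δ-system: there is an uncountable subcollection and a fixed finite set r (the root) such that any two distinct members of the subcollection intersect exactly in r. -/

import Mathlib

private theorem delta_aux {α : Type*} (n : ℕ) : ∀ (A : Set (Set α)),
    (∀ x ∈ A, x.Finite ∧ x.ncard = n) → ¬ A.Countable →
    ∃ A' ⊆ A, ¬ A'.Countable ∧ ∃ r : Set α, r.Finite ∧
      ∀ x ∈ A', ∀ y ∈ A', x ≠ y → x ∩ y = r := by
  induction n with
  | zero =>
    intro A hA hunc
    refine absurd ((Set.countable_singleton (∅ : Set α)).mono fun x hx => ?_) hunc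
    have h := hA x hx
    have : x = ∅ := (Set.ncard_eq_zero h.1).mp h.2
    simp [this]
  | succ n ih =>
    intro A hA hunc
    have hub : ∀ c ⊆ {D : Set (Set α) | D ⊆ A ∧ D.Pairwise Disjoint},
        IsChain (· ⊆ ·) c → ∃ ub ∈ {D | D ⊆ A ∧ D.Pairwise Disjoint}, ∀ s ∈ c, s ⊆ ub := by
      intro c hc hchain
      refine ⟨⋃₀ c, ⟨Set.sUnion_subset fun d hd => (hc hd).1, ?_⟩,
        fun s hs => Set.subset_sUnion_of_mem hs⟩
      rintro x ⟨d1, hd1, hx1⟩ y ⟨d2, hd2, hy2⟩ hxy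
      rcases hchain.total hd1 hd2 with h | h
      · exact (hc hd2).2 (h hx1) hy2 hxy
      · exact (hc hd1).2 hx1 (h hy2) hxy
    obtain ⟨D, hDmax⟩ := zorn_subset {D | D ⊆ A ∧ D.Pairwise Disjoint} hub
    · obtain ⟨hDA, hDdisj⟩ := hDmax.prop
      by_cases hDc : D.Countable
      · -- D countable: find a point in uncountably many members
        have hU : (⋃₀ D).Countable := by
          rw [Set.sUnion_eq_biUnion]
          exact hDc.biUnion fun x hx => ((hA x (hDA hx)).1).countable
        have hmeet : ∀ x ∈ A, (x ∩ ⋃₀ D).Nonempty := by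
          intro x hxA
          by_contra h
          rw [Set.not_nonempty_iff_eq_empty, ← Set.disjoint_iff_inter_eq_empty] at h
          have hins : insert x D ∈ {D | D ⊆ A ∧ D.Pairwise Disjoint} := by
            refine ⟨Set.insert_subset hxA hDA, hDdisj.insert fun d hd _ => ?_⟩
            have hxd : Disjoint x d := h.mono_right (Set.subset_sUnion_of_mem hd)
            exact ⟨hxd, hxd.symm⟩
          have hxD : x ∈ D := hDmax.2 hins (Set.subset_insert x D) (Set.mem_insert x D)
          have hxx : Disjoint x x := h.mono_right (Set.subset_sUnion_of_mem hxD)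
          have hx0 : x = ∅ := disjoint_self.mp hxx
          have := (hA x hxA).2
          simp [hx0] at this
        obtain ⟨a, haU, hBunc⟩ :
            ∃ a ∈ ⋃₀ D, ¬ {x ∈ A | a ∈ x}.Countable := by
          by_contra h
          push_neg at h
          refine hunc ((hU.biUnion h).mono fun x hx => ?_)
          obtain ⟨a, hax, haD⟩ := hmeet x hx
          exact Set.mem_biUnion haD ⟨hx, hax⟩
        set B := {x ∈ A | a ∈ x} with hBdef
        have hinj : Set.InjOn (fun x => x \ {a}) B := by
          intro x hx y hy h
          have hx' : insert a (x \ {a}) = x := by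
            rw [Set.insert_diff_singleton, Set.insert_eq_self.mpr hx.2]
          have hy' : insert a (y \ {a}) = y := by
            rw [Set.insert_diff_singleton, Set.insert_eq_self.mpr hy.2]
          rw [← hx', ← hy']
          simp only at h
          rw [h]
        have hB' : ∀ z ∈ (fun x => x \ {a}) '' B, z.Finite ∧ z.ncard = n := by
          rintro z ⟨x, hxB, rfl⟩
          refine ⟨(hA x hxB.1).1.diff, ?_⟩
          rw [Set.ncard_diff_singleton_of_mem hxB.2, (hA x hxB.1).2]
          omega
        have hB'unc : ¬ ((fun x => x \ {a}) '' B).Countable := fun h =>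
          hBunc (Set.countable_of_injective_of_countable_image hinj h)
        obtain ⟨C, hCB', hCunc, r', hr', hroot⟩ := ih _ hB' hB'unc
        refine ⟨{x ∈ B | x \ {a} ∈ C}, fun x hx => hx.1.1, ?_, insert a r',
          hr'.insert a, ?_⟩
        · intro h
          apply hCunc
          refine (h.image (fun x => x \ {a})).mono fun z hz => ?_
          obtain ⟨x, hxB, rfl⟩ := hCB' hz
          exact ⟨x, ⟨hxB, hz⟩, rfl⟩
        · rintro x ⟨hxB, hxC⟩ y ⟨hyB, hyC⟩ hxy
          have hne : x \ {a} ≠ y \ {a} := fun h => hxy (hinj hxB hyB h)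
          have hr := hroot _ hxC _ hyC hne
          have key : x ∩ y = insert a ((x \ {a}) ∩ (y \ {a})) := by
            ext b
            rcases eq_or_ne b a with rfl | hb
            · simp [hxB.2, hyB.2]
            · simp [hb]
          rw [key, hr]
      · -- D uncountable: root is ∅
        exact ⟨D, hDA, hDc, ∅, Set.finite_empty, fun x hx y hy hxy =>
          Set.disjoint_iff_inter_eq_empty.mp (hDdisj hx hy hxy)⟩

/-- The Δ-system lemma: every uncountable collection of finite sets contains an
uncountable Δ-system, i.e. an uncountable subcollection whose members pairwise
intersect in one fixed finite root `r`. -/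
theorem delta_system_lemma {α : Type*} (A : Set (Set α))
    (hfin : ∀ x ∈ A, x.Finite) (hunc : ¬ A.Countable) :
    ∃ A' ⊆ A, ¬ A'.Countable ∧ ∃ r : Set α, r.Finite ∧
      ∀ x ∈ A', ∀ y ∈ A', x ≠ y → x ∩ y = r := by
  obtain ⟨n, hn⟩ : ∃ n : ℕ, ¬ {x ∈ A | x.ncard = n}.Countable := by
    by_contra h
    push_neg at h
    refine hunc ((Set.countable_iUnion h).mono fun x hx => ?_)
    exact Set.mem_iUnion.mpr ⟨x.ncard, hx, rfl⟩
  obtain ⟨A', hA'sub, hA'unc, r, hr, hroot⟩ :=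
    delta_aux n {x ∈ A | x.ncard = n}
      (fun x hx => ⟨hfin x hx.1, hx.2⟩) hn
  exact ⟨A', fun x hx => (hA'sub hx).1, hA'unc, r, hr, hroot⟩
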